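/- Let φ : {0,1,…,n} → ℕ satisfy Σ_{ζ=0}^{n} ζ·φ(ζ) = n and let ζ̄ < n be a natural number. Then Σ_{ζ=ζ̄+1}^{n} φ(ζ)·√ζ ≤ n/√(ζ̄+1). -/
import Mathlib


/-- Tail-count bound with square roots:
`Σ_{ζ > ζ̄} φ(ζ)√ζ ≤ n/√(ζ̄+1)` when `Σ ζ φ(ζ) = n`. -/
theorem stmt4 (n : ℕ) (φ : ℕ → ℕ) (ζb : ℕ) (hζ : ζb < n)
    (htot : ∑ ζ ∈ Finset.range (n+1), ζ * φ ζ = n) :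
    (∑ ζ ∈ Finset.Icc (ζb+1) n, (φ ζ : ℝ) * Real.sqrt ζ)
      ≤ (n : ℝ) / Real.sqrt (ζb + 1) := by
  have hs : (0:ℝ) < Real.sqrt (ζb + 1) := Real.sqrt_pos.2 (by positivity)
  calc (∑ ζ ∈ Finset.Icc (ζb+1) n, (φ ζ : ℝ) * Real.sqrt ζ)
      ≤ ∑ ζ ∈ Finset.Icc (ζb+1) n, ((ζ : ℝ) * φ ζ) / Real.sqrt (ζb + 1) := by
        refine Finset.sum_le_sum fun ζ hζmem => ?_
        obtain ⟨h1, h2⟩ := Finset.mem_Icc.1 hζmem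
        have hζpos : (0:ℝ) < ζ := by
          have : 0 < ζ := lt_of_lt_of_le (Nat.succ_pos ζb) h1
          exact_mod_cast this
        have hsq : Real.sqrt (ζb + 1) ≤ Real.sqrt ζ := by
          apply Real.sqrt_le_sqrt
          exact_mod_cast h1
        have key : Real.sqrt ζ ≤ (ζ : ℝ) / Real.sqrt (ζb + 1) := by
          rw [le_div_iff₀ hs]
          calc Real.sqrt ζ * Real.sqrt (ζb + 1)
              ≤ Real.sqrt ζ * Real.sqrt ζ := by
                exact mul_le_mul_of_nonneg_left hsq (Real.sqrt_nonneg _)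
            _ = ζ := Real.mul_self_sqrt hζpos.le
        calc (φ ζ : ℝ) * Real.sqrt ζ ≤ (φ ζ : ℝ) * ((ζ : ℝ) / Real.sqrt (ζb + 1)) :=
              mul_le_mul_of_nonneg_left key (by positivity)
          _ = ((ζ : ℝ) * φ ζ) / Real.sqrt (ζb + 1) := by ring
    _ = (∑ ζ ∈ Finset.Icc (ζb+1) n, (ζ : ℝ) * φ ζ) / Real.sqrt (ζb + 1) := by
        rw [Finset.sum_div]
    _ ≤ (n : ℝ) / Real.sqrt (ζb + 1) := by
        gcongr
        have hsub : Finset.Icc (ζb+1) n ⊆ Finset.range (n+1) := by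
          intro x hx
          exact Finset.mem_range.2 (Nat.lt_succ_of_le (Finset.mem_Icc.1 hx).2)
        calc (∑ ζ ∈ Finset.Icc (ζb+1) n, (ζ : ℝ) * φ ζ)
            ≤ ∑ ζ ∈ Finset.range (n+1), (ζ : ℝ) * φ ζ :=
              Finset.sum_le_sum_of_subset_of_nonneg hsub (fun i _ _ => by positivity)
          _ = (n : ℝ) := by exact_mod_cast congrArg (Nat.cast : ℕ → ℝ) htot
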